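/- Let Π be a complete regular SCR polyhedral complex in N_ℝ. Define ρ : ⊕_{v ∈ Π(0)} PP^k(Π(v)) → ⊕_{γ ∈ Π(1), γ bounded} PP^k(Π(γ)) by sending (f_v) to the tuple whose γ-component is u_{v₁^γ,γ}^* f_{v₁^γ} − u_{v₂^γ,γ}^* f_{v₂^γ}, where v₁^γ, v₂^γ are the two endpoints of the bounded edge γ and u_{v,γ}^* is the pullback of piecewise polynomial functions along the inclusion of stars Π(γ) → Π(v). Then the kernel of ρ equals the set of affine piecewise polynomial functions PP^k(Π): a tuple (f_v) lies in ker(ρ) if and only if for every full-dimensional Λ ∈ Π and any two vertices v, v' of Λ one has f_{v,Λ} = f_{v',Λ}. -/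

import Mathlib

set_option maxRecDepth 8000


open scoped BigOperators

namespace PPArakelov

/-- Evaluation of a rational-coefficient multivariate polynomial at a real point. -/
noncomputable def evalR {m : ℕ} (p : MvPolynomial (Fin m) ℚ) (x : Fin m → ℝ) : ℝ :=
  MvPolynomial.eval x (MvPolynomial.map (algebraMap ℚ ℝ) p)

/-- Realization of an integral vector in `N_ℝ`. -/
def ι {m : ℕ} (v : Fin m → ℤ) : Fin m → ℝ := fun i => (v i : ℝ)

/-- Realization of a rational vector in `N_ℝ`. -/
def ιQ {m : ℕ} (v : Fin m → ℚ) : Fin m → ℝ := fun i => (v i : ℝ)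

/-- The convex cone generated by a finite set of vectors. -/
def coneOf {m : ℕ} (s : Finset (Fin m → ℝ)) : Set (Fin m → ℝ) :=
  { x | ∃ c : (Fin m → ℝ) → ℝ, (∀ v, 0 ≤ c v) ∧ x = ∑ v ∈ s, c v • v }

/-- A rational polyhedral cone: one generated by finitely many lattice vectors. -/
def IsRatCone {m : ℕ} (σ : Set (Fin m → ℝ)) : Prop :=
  ∃ s : Finset (Fin m → ℤ), σ = coneOf (s.image ι)

/-- `τ` is a face of the cone `σ`. -/
def IsFaceOfCone {m : ℕ} (τ σ : Set (Fin m → ℝ)) : Prop :=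
  ∃ u : (Fin m → ℝ) →ₗ[ℝ] ℝ, (∀ x ∈ σ, 0 ≤ u x) ∧ τ = {x ∈ σ | u x = 0}

/-- A rational polyhedral fan in `N_ℝ = ℝ^m`. -/
structure Fan (m : ℕ) where
  cones : Set (Set (Fin m → ℝ))
  finite : cones.Finite
  rat : ∀ σ ∈ cones, IsRatCone σ
  face_mem : ∀ σ ∈ cones, ∀ τ, IsFaceOfCone τ σ → τ ∈ cones
  inter_face : ∀ σ ∈ cones, ∀ σ' ∈ cones,
    IsFaceOfCone (σ ∩ σ') σ ∧ IsFaceOfCone (σ ∩ σ') σ'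

/-- The support `|Σ|` of a fan. -/
def Fan.supp {m : ℕ} (F : Fan m) : Set (Fin m → ℝ) := ⋃₀ F.cones

/-- A piecewise polynomial function on a fan (ambient version): on each cone it is
given by a polynomial with rational coefficients. -/
def PPfun {m : ℕ} (F : Fan m) (f : (Fin m → ℝ) → ℝ) : Prop :=
  ∀ σ ∈ F.cones, ∃ p : MvPolynomial (Fin m) ℚ, ∀ x ∈ σ, f x = evalR p x

/-- A piecewise polynomial function defined on the support `|Σ|` of a fan. -/
def PPfunOn {m : ℕ} (F : Fan m) (f : ↥F.supp → ℝ) : Prop :=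
  ∀ σ (hσ : σ ∈ F.cones), ∃ p : MvPolynomial (Fin m) ℚ,
    ∀ x (hx : x ∈ σ), f ⟨x, Set.mem_sUnion.mpr ⟨σ, hσ, hx⟩⟩ = evalR p x

/-- A homogeneous piecewise polynomial function of degree `k` on a fan. -/
def PPHomog {m : ℕ} (F : Fan m) (k : ℕ) (f : (Fin m → ℝ) → ℝ) : Prop :=
  ∀ σ ∈ F.cones, ∃ p : MvPolynomial (Fin m) ℚ, p.IsHomogeneous k ∧ ∀ x ∈ σ, f x = evalR p x

/-- A piecewise linear function on a fan. -/
def IsPWLinear {m : ℕ} (F : Fan m) (f : (Fin m → ℝ) → ℝ) : Prop :=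
  ∀ σ ∈ F.cones, ∃ ℓ : (Fin m → ℝ) →ₗ[ℝ] ℝ, ∀ x ∈ σ, f x = ℓ x

/-- A regular (smooth) fan: every cone is generated by part of a basis of the lattice. -/
def Fan.IsRegular {m : ℕ} (F : Fan m) : Prop :=
  ∀ σ ∈ F.cones, ∃ (b : Module.Basis (Fin m) ℤ (Fin m → ℤ)) (s : Finset (Fin m)),
    σ = coneOf (s.image fun j => ι (b j))

/-- A compatible tuple `(f_σ)_{σ ∈ Σ}` of polynomial functions on the cones of a fan:
`f_τ = f_σ|_τ` whenever `τ` is a face of `σ`. -/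
def CompatTuple {m : ℕ} (F : Fan m) (t : ∀ σ : F.cones, ↥(σ : Set (Fin m → ℝ)) → ℝ) : Prop :=
  (∀ σ : F.cones, ∃ p : MvPolynomial (Fin m) ℚ,
      ∀ x : ↥(σ : Set (Fin m → ℝ)), t σ x = evalR p (x : Fin m → ℝ)) ∧
  ∀ σ τ : F.cones, IsFaceOfCone (τ : Set (Fin m → ℝ)) (σ : Set (Fin m → ℝ)) →
    ∀ x (hx : x ∈ (τ : Set (Fin m → ℝ))) (hx' : x ∈ (σ : Set (Fin m → ℝ))),
      t τ ⟨x, hx⟩ = t σ ⟨x, hx'⟩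

/-- A rational polyhedron: convex hull of finitely many rational points plus a rational cone. -/
def polyhedronOf {m : ℕ} (V R : Finset (Fin m → ℚ)) : Set (Fin m → ℝ) :=
  { x | ∃ a c : (Fin m → ℚ) → ℝ,
      (∀ p, 0 ≤ a p) ∧ (∑ p ∈ V, a p = 1) ∧ (∀ v, 0 ≤ c v) ∧
      x = (∑ p ∈ V, a p • ιQ p) + ∑ v ∈ R, c v • ιQ v }

def IsRatPolyhedron {m : ℕ} (P : Set (Fin m → ℝ)) : Prop :=
  ∃ V R : Finset (Fin m → ℚ), V.Nonempty ∧ P = polyhedronOf V R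

/-- `Q` is a face of the polyhedron `P`. -/
def IsFaceOfPoly {m : ℕ} (Q P : Set (Fin m → ℝ)) : Prop :=
  ∃ (u : (Fin m → ℝ) →ₗ[ℝ] ℝ) (r : ℝ), (∀ x ∈ P, r ≤ u x) ∧ Q = {x ∈ P | u x = r}

/-- A (strongly convex) rational polyhedral complex in `N_ℝ = ℝ^m`. -/
structure PolyComplex (m : ℕ) where
  polys : Set (Set (Fin m → ℝ))
  finite : polys.Finite
  rat : ∀ P ∈ polys, IsRatPolyhedron P
  face_mem : ∀ P ∈ polys, ∀ Q, IsFaceOfPoly Q P → Q.Nonempty → Q ∈ polys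
  inter_face : ∀ P ∈ polys, ∀ P' ∈ polys, (P ∩ P').Nonempty →
    IsFaceOfPoly (P ∩ P') P ∧ IsFaceOfPoly (P ∩ P') P'

/-- A complete polyhedral complex covers all of `N_ℝ`. -/
def PolyComplex.IsComplete {m : ℕ} (C : PolyComplex m) : Prop := ⋃₀ C.polys = Set.univ

/-- The vertices `Π(0)` of a polyhedral complex. -/
def PolyComplex.vtx {m : ℕ} (C : PolyComplex m) : Set (Fin m → ℝ) :=
  {v | ({v} : Set (Fin m → ℝ)) ∈ C.polys}

/-- The cone of a polyhedron `P` at a point `v` (the cone of `P` in the star fan `Π(v)`). -/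
def coneAt {m : ℕ} (v : Fin m → ℝ) (P : Set (Fin m → ℝ)) : Set (Fin m → ℝ) :=
  {y | ∃ c : ℝ, 0 ≤ c ∧ ∃ x ∈ P, y = c • (x - v)}

/-- A piecewise polynomial function of degree `≤ k` on the star fan `Π(v)` at a vertex `v`. -/
def StarPP {m : ℕ} (C : PolyComplex m) (v : Fin m → ℝ) (k : ℕ)
    (f : (Fin m → ℝ) → ℝ) : Prop :=
  ∀ P ∈ C.polys, v ∈ P → ∃ p : MvPolynomial (Fin m) ℚ, p.totalDegree ≤ k ∧
    ∀ y ∈ coneAt v P, f y = evalR p y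

/-- A full-dimensional subset of `ℝ^m`. -/
def FullDim {m : ℕ} (P : Set (Fin m → ℝ)) : Prop := (interior P).Nonempty

/-- An affine piecewise polynomial function of degree `k` on a polyhedral complex:
a tuple `(f_v)` of piecewise polynomial functions on the star fans `Π(v)` such that on
every full-dimensional polyhedron `Λ` with vertices `v, v'`, the representing polynomials
agree: `f_{v,Λ} = f_{v',Λ}` as polynomial functions on `N_ℝ`. -/
def AffinePP {m : ℕ} (C : PolyComplex m) (k : ℕ)
    (f : (Fin m → ℝ) → ((Fin m → ℝ) → ℝ)) : Prop :=
  (∀ v ∈ C.vtx, StarPP C v k (f v)) ∧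
  ∀ Λ ∈ C.polys, FullDim Λ → ∀ v ∈ C.vtx, v ∈ Λ → ∀ v' ∈ C.vtx, v' ∈ Λ →
    ∀ p p' : MvPolynomial (Fin m) ℚ,
      p.totalDegree ≤ k → (∀ y ∈ coneAt v Λ, f v y = evalR p y) →
      p'.totalDegree ≤ k → (∀ y ∈ coneAt v' Λ, f v' y = evalR p' y) →
      ∀ x : Fin m → ℝ, evalR p (x - v) = evalR p' (x - v')

/-- `y` lies in the support of the star fan of `v`. -/
def InStar {m : ℕ} (C : PolyComplex m) (v y : Fin m → ℝ) : Prop :=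
  ∃ P ∈ C.polys, v ∈ P ∧ y ∈ coneAt v P

/-- A piecewise affine function with respect to the complex `C` (rational coefficients). -/
def IsPA {m : ℕ} (C : PolyComplex m) (g : (Fin m → ℝ) → ℝ) : Prop :=
  Continuous g ∧ ∀ Λ ∈ C.polys, ∃ p : MvPolynomial (Fin m) ℚ, p.totalDegree ≤ 1 ∧
    ∀ x ∈ Λ, g x = evalR p x

/-- The tuple `f = (f_v)` induces the global function `g`. -/
def Induces {m : ℕ} (C : PolyComplex m) (f : (Fin m → ℝ) → ((Fin m → ℝ) → ℝ))
    (g : (Fin m → ℝ) → ℝ) : Prop :=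
  ∀ v ∈ C.vtx, ∀ Λ ∈ C.polys, v ∈ Λ → ∀ x ∈ Λ, g x = f v (x - v)

/-- `γ` is a bounded edge of the complex `C` with endpoints `v ≠ w`. -/
def IsBddEdge {m : ℕ} (C : PolyComplex m) (γ : Set (Fin m → ℝ)) (v w : Fin m → ℝ) : Prop :=
  γ ∈ C.polys ∧ v ≠ w ∧ v ∈ C.vtx ∧ w ∈ C.vtx ∧ γ = segment ℝ v w

/-- The condition that the tuple `(f_v)` lies in the kernel of the map `ρ`: for every
bounded edge `γ` with endpoints `v, w`, the pullbacks of `f_v` and `f_w` to the star of `γ`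
agree (affinely based at the respective vertices). -/
def KerRho {m : ℕ} (C : PolyComplex m)
    (f : (Fin m → ℝ) → ((Fin m → ℝ) → ℝ)) : Prop :=
  ∀ γ v w, IsBddEdge C γ v w → ∀ P ∈ C.polys, γ ⊆ P → ∀ x ∈ P, f v (x - v) = f w (x - w)

/-- `C'` refines (subdivides) `C`. -/
def Refines {m : ℕ} (C' C : PolyComplex m) : Prop :=
  ∀ P' ∈ C'.polys, ∃ P ∈ C.polys, P' ⊆ P

/-- The cone `c(P) ⊆ N_ℝ × ℝ_{≥0}` over a polyhedron `P ⊆ N_ℝ`. -/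
def cPoly {m : ℕ} (P : Set (Fin m → ℝ)) : Set (Fin (m + 1) → ℝ) :=
  closure { z | 0 < z (Fin.last m) ∧ (fun i : Fin m => z i.castSucc / z (Fin.last m)) ∈ P }

/-- A regular SCR polyhedral complex: the cone `c(P)` of every polyhedron is a regular cone. -/
def PolyComplex.IsRegular {m : ℕ} (C : PolyComplex m) : Prop :=
  ∀ P ∈ C.polys, ∃ (b : Module.Basis (Fin (m + 1)) ℤ (Fin (m + 1) → ℤ)) (s : Finset (Fin (m + 1))),
    cPoly P = coneOf (s.image fun j => ι (b j))

/-- The recession cone of a polyhedron. -/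
def recCone {m : ℕ} (P : Set (Fin m → ℝ)) : Set (Fin m → ℝ) :=
  {y | ∀ x ∈ P, ∀ c : ℝ, 0 ≤ c → x + c • y ∈ P}

/-- The recession fan (as a set of cones) of a polyhedral complex. -/
def recSet {m : ℕ} (C : PolyComplex m) : Set (Set (Fin m → ℝ)) :=
  {σ | ∃ P ∈ C.polys, σ = recCone P}

/-- Membership in `R(Σ)`: complete regular SCR polyhedral complexes with recession fan `Σ`. -/
def InRSigma {m : ℕ} (F : Fan m) (C : PolyComplex m) : Prop :=
  C.IsComplete ∧ C.IsRegular ∧ recSet C = F.cones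

/-- Homogeneous piecewise polynomial functions of degree `k` on the fan `c(Π)`. -/
def PPconeHom {m : ℕ} (C : PolyComplex m) (k : ℕ) (f : (Fin (m + 1) → ℝ) → ℝ) : Prop :=
  ∀ P ∈ C.polys, ∃ p : MvPolynomial (Fin (m + 1)) ℚ, p.IsHomogeneous k ∧
    ∀ z ∈ cPoly P, f z = evalR p z

/-- `PP^k_Σ(N_ℝ ⊕ ℝ_{≥0})`: functions that are piecewise polynomial of degree `k`
with respect to `c(Π)` for some `Π ∈ R(Σ)`. -/
def PPSigma {m : ℕ} (F : Fan m) (k : ℕ) (f : (Fin (m + 1) → ℝ) → ℝ) : Prop :=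
  ∃ C : PolyComplex m, InRSigma F C ∧ PPconeHom C k f

/-- The canonical piecewise-linear function attached to the ray through `v` (value `1` at
`v`, vanishing on cones not containing `v`). -/
def IsRayFunGen {m : ℕ} (F : Fan m) (v : Fin m → ℝ) (f : (Fin m → ℝ) → ℝ) : Prop :=
  IsPWLinear F f ∧ PPfun F f ∧ f v = 1 ∧
  ∀ σ ∈ F.cones, v ∉ σ → ∀ x ∈ σ, f x = 0

/-- A family `σ ↦ φ_σ` of canonical piecewise polynomial generators: `φ_σ` is the product
of the ray functions of the rays of the regular cone `σ`. -/
def IsCanonFamily {m : ℕ} (F : Fan m) (Φ : Set (Fin m → ℝ) → ((Fin m → ℝ) → ℝ)) : Prop :=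
  ∀ σ ∈ F.cones, ∃ (b : Module.Basis (Fin m) ℤ (Fin m → ℤ)) (s : Finset (Fin m))
    (rf : Fin m → ((Fin m → ℝ) → ℝ)),
      σ = coneOf (s.image fun j => ι (b j)) ∧
      (∀ j ∈ s, IsRayFunGen F (ι (b j)) (rf j)) ∧
      ∀ x, Φ σ x = ∏ j ∈ s, rf j x

/-- A maximal (full-dimensional) cone of a fan. -/
def IsMaxCone {m : ℕ} (F : Fan m) (σ : Set (Fin m → ℝ)) : Prop :=
  σ ∈ F.cones ∧ Submodule.span ℝ σ = ⊤

/-- `σ` is the minimal cone of `F` containing the set `S`. -/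
def IsMinConeOver {m : ℕ} (F : Fan m) (S σ : Set (Fin m → ℝ)) : Prop :=
  σ ∈ F.cones ∧ S ⊆ σ ∧ ∀ τ ∈ F.cones, S ⊆ τ → σ ⊆ τ

/-- The polynomial `p` represents the function `f` on the cone `σ`. -/
def Represents {m : ℕ} (f : (Fin m → ℝ) → ℝ) (σ : Set (Fin m → ℝ))
    (p : MvPolynomial (Fin m) ℚ) : Prop :=
  ∀ x ∈ σ, f x = evalR p x

/-- Maximal cones of `F'` whose image under `μ` has minimal containing cone `σ` in `F`. -/
def MaxOver {m : ℕ} (F' F : Fan m) (μ : (Fin m → ℝ) ≃ₗ[ℝ] (Fin m → ℝ))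
    (σ : Set (Fin m → ℝ)) : Set (Set (Fin m → ℝ)) :=
  {σ' | IsMaxCone F' σ' ∧ IsMinConeOver F (μ '' σ') σ}

/-- The operator `P` realizes the pushforward formula
`(π_* f)_σ = φ_σ · Σ_{μ(σ')=σ} φ_{σ'}^{-1} f_{σ'}` on maximal cones (with cleared
denominators, as an identity of the unique representing polynomials). -/
def PushFormula {m : ℕ} (F' F : Fan m) (μ : (Fin m → ℝ) ≃ₗ[ℝ] (Fin m → ℝ))
    (Φ' Φ : Set (Fin m → ℝ) → ((Fin m → ℝ) → ℝ))
    (P : ((Fin m → ℝ) → ℝ) → ((Fin m → ℝ) → ℝ)) : Prop :=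
  (∀ f, PPfun F' f → PPfun F (P f)) ∧
  ∀ f, PPfun F' f →
    ∀ q pΦ' : Set (Fin m → ℝ) → MvPolynomial (Fin m) ℚ,
      (∀ σ', IsMaxCone F' σ' → Represents f σ' (q σ') ∧ Represents (Φ' σ') σ' (pΦ' σ')) →
      ∀ σ, IsMaxCone F σ →
        ∀ r pσ : MvPolynomial (Fin m) ℚ, Represents (P f) σ r → Represents (Φ σ) σ pσ →
          ∀ y : Fin m → ℝ,
            evalR r y * ∏ᶠ σ' ∈ MaxOver F' F μ σ, evalR (pΦ' σ') (μ.symm y)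
              = evalR pσ y * ∑ᶠ σ' ∈ MaxOver F' F μ σ,
                  evalR (q σ') (μ.symm y) *
                    ∏ᶠ σ'' ∈ (MaxOver F' F μ σ) \ {σ'}, evalR (pΦ' σ'') (μ.symm y)

/-- The pullback of an affine piecewise polynomial tuple along a refinement `C' → C`. -/
def IsPullbackTuple {m : ℕ} (C C' : PolyComplex m) (k : ℕ)
    (f f' : (Fin m → ℝ) → ((Fin m → ℝ) → ℝ)) : Prop :=
  (∀ v' ∈ C'.vtx, v' ∈ C.vtx → ∀ y, InStar C' v' y → f' v' y = f v' y) ∧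
  (∀ v' ∈ C'.vtx, v' ∉ C.vtx → ∀ Λ ∈ C.polys, FullDim Λ → v' ∈ Λ →
    ∀ v ∈ C.vtx, v ∈ Λ → ∀ p : MvPolynomial (Fin m) ℚ, p.totalDegree ≤ k →
      (∀ y ∈ coneAt v Λ, f v y = evalR p y) →
      ∀ P' ∈ C'.polys, v' ∈ P' → P' ⊆ Λ → ∀ y ∈ coneAt v' P',
        f' v' y = evalR p ((y + v') - v))

/-- The piecewise linear function `φ_{v,γ}` attached at the vertex `v` to the edge `γ`
towards the vertex `w`: linear on the cones of `Π(v)`, vanishing on cones of polyhedra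
not containing `w`, normalized on the ray towards `w`. -/
def IsRayFunAt {m : ℕ} (C : PolyComplex m) (v w : Fin m → ℝ)
    (φ : (Fin m → ℝ) → ℝ) : Prop :=
  (∀ P ∈ C.polys, v ∈ P → ∃ ℓ : (Fin m → ℝ) →ₗ[ℝ] ℝ, ∀ y ∈ coneAt v P, φ y = ℓ y) ∧
  (∀ P ∈ C.polys, v ∈ P → w ∉ P → ∀ y ∈ coneAt v P, φ y = 0) ∧
  (∃ c : ℝ, 0 < c ∧ φ (c • (w - v)) = 1)

/-- `g = -γρ(f)`: the characterization of the composite map `-γρ` in terms of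
representing polynomials, following the explicit formula of the pushforward and pullback
maps: `(-γρ f)_v = Σ_γ (u_{v,γ*} u_{v_γ,γ}^* f_{v_γ} - φ_{v,γ} f_v)`. -/
def IsMinusGammaRho {m : ℕ} (C : PolyComplex m) (k : ℕ)
    (φ : (Fin m → ℝ) → (Fin m → ℝ) → ((Fin m → ℝ) → ℝ))
    (f g : (Fin m → ℝ) → ((Fin m → ℝ) → ℝ)) : Prop :=
  ∀ v ∈ C.vtx, ∀ P ∈ C.polys, FullDim P → v ∈ P →
    ∀ q : (Fin m → ℝ) → MvPolynomial (Fin m) ℚ,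
      (∀ u ∈ C.vtx, u ∈ P →
        (q u).totalDegree ≤ k ∧ ∀ y ∈ coneAt u P, f u y = evalR (q u) y) →
      ∀ y ∈ coneAt v P,
        g v y = ∑ᶠ w ∈ {w | w ∈ C.vtx ∧ w ≠ v ∧ segment ℝ v w ∈ C.polys ∧
                            segment ℝ v w ⊆ P},
          φ v w y * (evalR (q w) ((y + v) - w) - evalR (q v) y)




section Aux
open scoped Pointwise

lemma exists_line_poly {m : ℕ} (p : MvPolynomial (Fin m) ℚ) (z w : Fin m → ℝ) :
    ∃ q : Polynomial ℝ, ∀ t : ℝ, q.eval t = evalR p (z + t • w) := by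
  classical
  refine ⟨MvPolynomial.eval₂ (Polynomial.C)
      (fun i => Polynomial.C (z i) + Polynomial.C (w i) * Polynomial.X)
      (MvPolynomial.map (algebraMap ℚ ℝ) p), fun t => ?_⟩
  have h := MvPolynomial.eval₂_comp_left (Polynomial.evalRingHom t)
      (Polynomial.C : ℝ →+* Polynomial ℝ)
      (fun i => Polynomial.C (z i) + Polynomial.C (w i) * Polynomial.X)
      (MvPolynomial.map (algebraMap ℚ ℝ) p)
  have hc : (Polynomial.evalRingHom t).comp (Polynomial.C : ℝ →+* Polynomial ℝ) = RingHom.id ℝ := by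
    ext x; simp
  rw [hc] at h
  have : ((Polynomial.evalRingHom t) ∘ fun i => Polynomial.C (z i) + Polynomial.C (w i) * Polynomial.X)
      = fun i => z i + t • w i := by
    funext i
    show Polynomial.eval t (Polynomial.C (z i) + Polynomial.C (w i) * Polynomial.X) = _
    rw [Polynomial.eval_add, Polynomial.eval_mul, Polynomial.eval_C, Polynomial.eval_X,
      smul_eq_mul, mul_comm, Polynomial.eval_C]
  rw [this] at h
  show Polynomial.eval t _ = _
  rw [show (Polynomial.eval t : Polynomial ℝ → ℝ) = (Polynomial.evalRingHom t : Polynomial ℝ → ℝ) from rfl]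
  rw [h]
  rfl

lemma evalR_shift_eq_of_ball {m : ℕ} (p p' : MvPolynomial (Fin m) ℚ) (v v' z : Fin m → ℝ)
    {ε : ℝ} (hε : 0 < ε)
    (h : ∀ x ∈ Metric.ball z ε, evalR p (x - v) = evalR p' (x - v')) (x : Fin m → ℝ) :
    evalR p (x - v) = evalR p' (x - v') := by
  obtain ⟨q1, hq1⟩ := exists_line_poly p (z - v) (x - z)
  obtain ⟨q2, hq2⟩ := exists_line_poly p' (z - v') (x - z)
  have key : ∀ t : ℝ, z + t • (x - z) ∈ Metric.ball z ε → q1.eval t = q2.eval t := by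
    intro t ht
    have h2 := h _ ht
    have e1 : z + t • (x - z) - v = (z - v) + t • (x - z) := by abel
    have e2 : z + t • (x - z) - v' = (z - v') + t • (x - z) := by abel
    rw [e1, e2] at h2
    rw [hq1, hq2]; exact h2
  by_cases hxz : x = z
  · subst hxz
    exact h x (Metric.mem_ball_self hε)
  · have hn : (0:ℝ) < ‖x - z‖ := by
      rw [norm_pos_iff]; exact sub_ne_zero.mpr hxz
    set δ := ε / ‖x - z‖ with hδ
    have hδ0 : 0 < δ := div_pos hε hn
    have hroots : ∀ t ∈ Set.Ioo (0:ℝ) δ, (q1 - q2).eval t = 0 := by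
      intro t ht
      have hball : z + t • (x - z) ∈ Metric.ball z ε := by
        rw [Metric.mem_ball, dist_eq_norm, add_sub_cancel_left, norm_smul, Real.norm_eq_abs,
          abs_of_pos ht.1]
        calc t * ‖x - z‖ < δ * ‖x - z‖ := by
              exact mul_lt_mul_of_pos_right ht.2 hn
          _ = ε := by rw [hδ]; field_simp
      simp [Polynomial.eval_sub, key t hball]
    have : q1 - q2 = 0 := by
      apply Polynomial.eq_zero_of_infinite_isRoot
      apply Set.Infinite.mono (s := Set.Ioo (0:ℝ) δ)
      · intro t ht; exact hroots t ht
      · rw [← Set.infinite_coe_iff]; exact Set.Ioo.infinite hδ0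
    have h1 : q1.eval 1 = q2.eval 1 := by
      have := sub_eq_zero.mp this; rw [this]
    have e1 : (z - v) + (1:ℝ) • (x - z) = x - v := by rw [one_smul]; abel
    have e2 : (z - v') + (1:ℝ) • (x - z) = x - v' := by rw [one_smul]; abel
    rw [← e1, ← e2, ← hq1, ← hq2]; exact h1


lemma coneOf_mono {m : ℕ} {t s : Finset (Fin m → ℝ)} (h : t ⊆ s) : coneOf t ⊆ coneOf s := by
  classical
  rintro x ⟨c, hc, rfl⟩
  refine ⟨fun v => if v ∈ t then c v else 0, fun v => ?_, ?_⟩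
  · show 0 ≤ if v ∈ t then c v else 0
    by_cases hv : v ∈ t
    · rw [if_pos hv]; exact hc v
    · rw [if_neg hv]
  rw [← Finset.sum_subset h (by intro v _ hv; simp [hv])]
  exact Finset.sum_congr rfl (by intro v hv; simp [hv])

lemma coneOf_closed_of_linearIndependent {m : ℕ} (t : Finset (Fin m → ℝ))
    (h : LinearIndependent ℝ (fun v : {v // v ∈ t} => (v : Fin m → ℝ))) :
    IsClosed (coneOf t) := by
  classical
  let φ : ({v // v ∈ t} → ℝ) →ₗ[ℝ] (Fin m → ℝ) :=
    { toFun := fun c => ∑ v : {v // v ∈ t}, c v • (v : Fin m → ℝ)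
      map_add' := by intro a b; simp [add_smul, Finset.sum_add_distrib]
      map_smul' := by intro r a; simp [smul_smul, Finset.smul_sum] }
  have hker : LinearMap.ker φ = ⊥ := by
    rw [LinearMap.ker_eq_bot']
    intro c hc
    funext v
    exact Fintype.linearIndependent_iff.mp h c hc v
  have hemb := LinearMap.isClosedEmbedding_of_injective hker
  have hK : IsClosed {c : {v // v ∈ t} → ℝ | ∀ v, 0 ≤ c v} := by
    have : {c : {v // v ∈ t} → ℝ | ∀ v, 0 ≤ c v} = ⋂ v, {c | 0 ≤ c v} := by ext; simp [Set.mem_iInter]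
    rw [this]
    exact isClosed_iInter fun v => isClosed_le continuous_const (continuous_apply v)
  have himg : coneOf t = φ '' {c | ∀ v, 0 ≤ c v} := by
    ext x; constructor
    · rintro ⟨c, hc, rfl⟩
      refine ⟨fun v => c v, fun v => hc v, ?_⟩
      show ∑ v : {v // v ∈ t}, c (v:Fin m → ℝ) • (v : Fin m → ℝ) = ∑ v ∈ t, c v • v
      rw [Finset.univ_eq_attach, Finset.sum_attach t (fun v => c v • v)]
    · rintro ⟨c, hc, rfl⟩
      refine ⟨fun v => if h : v ∈ t then c ⟨v, h⟩ else 0,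
        fun v => by by_cases h : v ∈ t <;> simp [h]; exact hc _, ?_⟩
      show ∑ v : {v // v ∈ t}, c v • (v : Fin m → ℝ) = _
      rw [Finset.univ_eq_attach, ← Finset.sum_attach t
        (fun v => (if h : v ∈ t then c ⟨v, h⟩ else 0) • v)]
      refine Finset.sum_congr rfl ?_
      intro v _
      rw [dif_pos v.2]
  rw [himg]
  exact hemb.isClosedMap _ hK

lemma cone_caratheodory {m : ℕ} (s : Finset (Fin m → ℝ)) :
    ∀ x ∈ coneOf s, ∃ t ⊆ s,
      (LinearIndependent ℝ (fun v : {v // v ∈ t} => (v : Fin m → ℝ))) ∧ x ∈ coneOf t := by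
  classical
  induction s using Finset.strongInduction with
  | _ s ih =>
    intro x hx
    by_cases hli : LinearIndependent ℝ (fun v : {v // v ∈ s} => (v : Fin m → ℝ))
    · exact ⟨s, le_refl _, hli, hx⟩
    · obtain ⟨c, hc0, hcx⟩ := hx
      -- extract a dependence relation with a positive coefficient
      have hrel : ∃ d : (Fin m → ℝ) → ℝ, (∑ v ∈ s, d v • v = 0) ∧ ∃ v ∈ s, 0 < d v := by
        rw [Fintype.linearIndependent_iff] at hli
        push_neg at hli
        obtain ⟨g, hg0, v0, hv0⟩ := hli
        set d : (Fin m → ℝ) → ℝ := fun v => if h : v ∈ s then g ⟨v, h⟩ else 0 with hd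
        have hsum : ∑ v ∈ s, d v • v = 0 := by
          rw [← Finset.sum_attach s (fun v => d v • v), ← hg0, Finset.univ_eq_attach]
          refine Finset.sum_congr rfl ?_
          intro v _
          rw [hd]; simp
        by_cases hpos : ∃ v ∈ s, 0 < d v
        · exact ⟨d, hsum, hpos⟩
        · push_neg at hpos
          refine ⟨-d, by simpa [neg_smul] using congrArg Neg.neg hsum, (v0 : Fin m → ℝ), v0.2, ?_⟩
          have h1 : d v0 ≤ 0 := hpos _ v0.2
          have h2 : d (v0 : Fin m → ℝ) ≠ 0 := by rw [hd]; simpa using hv0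
          simp only [Pi.neg_apply]
          cases lt_or_eq_of_le h1 with
          | inl h => linarith
          | inr h => exact absurd h h2
      obtain ⟨d, hdsum, hdpos⟩ := hrel
      set T := s.filter (fun v => 0 < d v) with hT
      have hTne : T.Nonempty := by
        obtain ⟨v, hv, hdv⟩ := hdpos
        exact ⟨v, Finset.mem_filter.mpr ⟨hv, hdv⟩⟩
      obtain ⟨v0, hv0T, hv0min⟩ := Finset.exists_min_image T (fun v => c v / d v) hTne
      have hv0s : v0 ∈ s := (Finset.mem_filter.mp hv0T).1
      have hd0 : 0 < d v0 := (Finset.mem_filter.mp hv0T).2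
      set lam := c v0 / d v0 with hlam
      have hlam0 : 0 ≤ lam := div_nonneg (hc0 v0) hd0.le
      have hkey : ∀ v ∈ s, 0 ≤ c v - lam * d v := by
        intro v hv
        by_cases hdv : 0 < d v
        · have := hv0min v (Finset.mem_filter.mpr ⟨hv, hdv⟩)
          rw [hlam, div_le_div_iff₀ hd0 hdv] at this
          rw [sub_nonneg, hlam, div_mul_eq_mul_div, div_le_iff₀ hd0]
          exact this
        · push_neg at hdv
          nlinarith [hc0 v, mul_nonpos_of_nonneg_of_nonpos hlam0 hdv]
      have hxmem : x ∈ coneOf (s.erase v0) := by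
        refine ⟨fun v => if v ∈ s.erase v0 then c v - lam * d v else 0, fun v => ?_, ?_⟩
        · show 0 ≤ if v ∈ s.erase v0 then c v - lam * d v else 0
          by_cases hv : v ∈ s.erase v0
          · rw [if_pos hv]; exact hkey v (Finset.mem_of_mem_erase hv)
          · rw [if_neg hv]
        have h1 : ∑ v ∈ s.erase v0, (if v ∈ s.erase v0 then c v - lam * d v else 0) • v
            = ∑ v ∈ s.erase v0, (c v - lam * d v) • v :=
          Finset.sum_congr rfl (by intro v hv; rw [if_pos hv])
        have h2 : ∑ v ∈ s, (c v - lam * d v) • v = ∑ v ∈ s.erase v0, (c v - lam * d v) • v := by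
          rw [← Finset.add_sum_erase _ _ hv0s]
          have : c v0 - lam * d v0 = 0 := by
            rw [hlam]; field_simp; ring
          rw [this, zero_smul, zero_add]
        have h3 : ∑ v ∈ s, (c v - lam * d v) • v = x := by
          calc ∑ v ∈ s, (c v - lam * d v) • v
              = ∑ v ∈ s, (c v • v - lam • (d v • v)) := by
                refine Finset.sum_congr rfl ?_
                intro v _
                rw [sub_smul, smul_smul]
            _ = (∑ v ∈ s, c v • v) - lam • ∑ v ∈ s, d v • v := by
                rw [Finset.sum_sub_distrib, Finset.smul_sum]
            _ = x := by rw [hdsum, smul_zero, sub_zero, ← hcx]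
        rw [h1, ← h2, h3]
      obtain ⟨t, hts, hli', hxt⟩ := ih (s.erase v0) (Finset.erase_ssubset hv0s) x hxmem
      exact ⟨t, hts.trans (Finset.erase_subset _ _), hli', hxt⟩

lemma coneOf_isClosed {m : ℕ} (s : Finset (Fin m → ℝ)) : IsClosed (coneOf s) := by
  classical
  have : coneOf s = ⋃ t ∈ (s.powerset.filter
      (fun t => LinearIndependent ℝ (fun v : {v // v ∈ t} => (v : Fin m → ℝ)))), coneOf t := by
    ext x; constructor
    · intro hx
      obtain ⟨t, hts, hli, hxt⟩ := cone_caratheodory s x hx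
      exact Set.mem_biUnion (Finset.mem_filter.mpr ⟨Finset.mem_powerset.mpr hts, hli⟩) hxt
    · intro hx
      obtain ⟨t, ht, hxt⟩ := Set.mem_iUnion₂.mp hx
      exact coneOf_mono (Finset.mem_powerset.mp (Finset.mem_filter.mp ht).1) hxt
  rw [this]
  refine Set.Finite.isClosed_biUnion (Finset.finite_toSet _) ?_
  intro t ht
  exact coneOf_closed_of_linearIndependent t (Finset.mem_filter.mp ht).2


lemma iQ_injective {m : ℕ} : Function.Injective (ιQ (m := m)) := by
  intro a b hab
  funext i
  have := congrFun hab i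
  simp only [ιQ] at this
  exact_mod_cast this

lemma polyhedron_nonempty {m : ℕ} {V R : Finset (Fin m → ℚ)} (hV : V.Nonempty) :
    (polyhedronOf V R).Nonempty := by
  classical
  obtain ⟨p0, hp0⟩ := hV
  refine ⟨ιQ p0, ⟨fun p => if p = p0 then 1 else 0, 0, fun p => by positivity, ?_, fun v => le_refl 0, ?_⟩⟩
  · rw [Finset.sum_ite_eq' V p0 (fun _ => (1:ℝ))]
    rw [if_pos hp0]
  · have h1 : ∀ p ∈ V, (if p = p0 then (1:ℝ) else 0) • ιQ p = if p = p0 then ιQ p0 else 0 := by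
      intro p _; by_cases h : p = p0 <;> simp [h]
    rw [Finset.sum_congr rfl h1, Finset.sum_ite_eq' V p0 (fun _ => ιQ p0), if_pos hp0]
    simp

lemma polyhedron_convex {m : ℕ} (V R : Finset (Fin m → ℚ)) : Convex ℝ (polyhedronOf V R) := by
  rintro x ⟨a, c, ha0, ha1, hc0, rfl⟩ y ⟨a', c', ha0', ha1', hc0', rfl⟩ θ θ' hθ hθ' hθθ
  refine ⟨fun p => θ * a p + θ' * a' p, fun v => θ * c v + θ' * c' v,
    fun p => add_nonneg (mul_nonneg hθ (ha0 p)) (mul_nonneg hθ' (ha0' p)), ?_,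
    fun v => add_nonneg (mul_nonneg hθ (hc0 v)) (mul_nonneg hθ' (hc0' v)), ?_⟩
  · rw [Finset.sum_add_distrib, ← Finset.mul_sum, ← Finset.mul_sum, ha1, ha1']
    simpa using hθθ
  · simp only [smul_add, Finset.smul_sum, smul_smul, add_smul]
    rw [Finset.sum_add_distrib, Finset.sum_add_distrib]
    abel

lemma polyhedron_closed {m : ℕ} {P : Set (Fin m → ℝ)} (h : IsRatPolyhedron P) : IsClosed P := by
  classical
  obtain ⟨V, R, hV, rfl⟩ := h
  set A : Set (Fin m → ℝ) := (fun a : {q // q ∈ V} → ℝ => ∑ q : {q // q ∈ V}, a q • ιQ (q : Fin m → ℚ)) ''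
    (stdSimplex ℝ {q // q ∈ V}) with hA
  have hAcomp : IsCompact A := by
    apply (isCompact_stdSimplex ℝ _).image
    exact continuous_finset_sum _ (fun q _ => (continuous_apply q).smul continuous_const)
  have hBclosed : IsClosed (coneOf (R.image ιQ)) := coneOf_isClosed _
  have hsum : polyhedronOf V R = A + coneOf (R.image ιQ) := by
    ext x
    constructor
    · rintro ⟨a, c, ha0, ha1, hc0, rfl⟩
      rw [Set.mem_add]
      refine ⟨∑ p ∈ V, a p • ιQ p, ?_, ∑ v ∈ R, c v • ιQ v, ?_, rfl⟩
      · refine ⟨fun q => a (q : Fin m → ℚ), ⟨fun q => ha0 _, ?_⟩, ?_⟩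
        · beta_reduce
          rw [Finset.univ_eq_attach, Finset.sum_attach V a]; exact ha1
        · beta_reduce
          rw [Finset.univ_eq_attach, Finset.sum_attach V (fun p => a p • ιQ p)]
      · refine ⟨fun v => ∑ q ∈ R.filter (fun q => ιQ q = v), c q, fun v => Finset.sum_nonneg (fun q _ => hc0 q), ?_⟩
        rw [Finset.sum_image (fun q _ q' _ h => iQ_injective h)]
        refine Finset.sum_congr rfl ?_
        intro q hq
        beta_reduce
        have hfil : R.filter (fun q' => ιQ q' = ιQ q) = {q} := by
          ext q'
          simp only [Finset.mem_filter, Finset.mem_singleton]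
          constructor
          · rintro ⟨_, h⟩; exact iQ_injective h
          · rintro rfl; exact ⟨hq, rfl⟩
        rw [hfil, Finset.sum_singleton]
    · rintro ⟨u, ⟨a, ⟨ha0, ha1⟩, rfl⟩, w, ⟨c, hc0, rfl⟩, rfl⟩
      refine ⟨fun p => if h : p ∈ V then a ⟨p, h⟩ else 0, fun v => c (ιQ v), ?_, ?_, fun v => hc0 _, ?_⟩
      · intro p
        beta_reduce
        by_cases h : p ∈ V
        · rw [dif_pos h]; exact ha0 _
        · rw [dif_neg h]
      · rw [← Finset.sum_attach V (fun p => if h : p ∈ V then a ⟨p, h⟩ else 0)]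
        rw [← ha1, Finset.univ_eq_attach]
        refine Finset.sum_congr rfl ?_
        intro q _
        rw [dif_pos q.2]
      · beta_reduce
        congr 1
        · rw [Finset.univ_eq_attach,
            ← Finset.sum_attach V (fun p => (if h : p ∈ V then a ⟨p, h⟩ else 0) • ιQ p)]
          refine Finset.sum_congr rfl ?_
          intro q _
          rw [dif_pos q.2]
        · rw [Finset.sum_image (fun q _ q' _ h => iQ_injective h)]
  rw [hsum]
  exact IsClosed.add_left_of_isCompact hBclosed hAcomp


lemma exists_interior_nonempty_of_cover {X : Type*} [TopologicalSpace X] :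
    ∀ (S : Finset (Set X)), (∀ Q ∈ S, IsClosed Q) → ∀ (U : Set X), IsOpen U → U.Nonempty →
      U ⊆ ⋃₀ ↑S → ∃ Q ∈ S, (interior Q).Nonempty := by
  classical
  intro S
  induction S using Finset.induction with
  | empty =>
    intro _ U _ hUne hUsub
    obtain ⟨u, hu⟩ := hUne
    simpa using hUsub hu
  | @insert Q S hQS ih =>
    intro hcl U hUopen hUne hUsub
    by_cases hi : (interior Q).Nonempty
    · exact ⟨Q, Finset.mem_insert_self _ _, hi⟩
    · set U' := U ∩ Qᶜ with hU'
      by_cases hU'ne : U'.Nonempty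
      · have hU'op : IsOpen U' :=
          hUopen.inter (hcl Q (Finset.mem_insert_self _ _)).isOpen_compl
        have hsub : U' ⊆ ⋃₀ ↑S := by
          rintro y ⟨hyU, hyQ⟩
          obtain ⟨Q', hQ', hyQ'⟩ := hUsub hyU
          rw [Finset.coe_insert, Set.mem_insert_iff] at hQ'
          rcases hQ' with rfl | hQ'
          · exact absurd hyQ' hyQ
          · exact ⟨Q', hQ', hyQ'⟩
        obtain ⟨Q', hQ', hi'⟩ := ih (fun R hR => hcl R (Finset.mem_insert_of_mem hR)) U' hU'op hU'ne hsub
        exact ⟨Q', Finset.mem_insert_of_mem hQ', hi'⟩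
      · exfalso
        apply hi
        rw [Set.not_nonempty_iff_eq_empty] at hU'ne
        have hUQ : U ⊆ Q := by
          intro y hy
          by_contra hyQ
          exact Set.eq_empty_iff_forall_notMem.mp hU'ne y ⟨hy, hyQ⟩
        obtain ⟨u, hu⟩ := hUne
        exact ⟨u, interior_maximal hUQ hUopen hu⟩



lemma polys_closed {m : ℕ} (C : PolyComplex m) {P : Set (Fin m → ℝ)} (hP : P ∈ C.polys) :
    IsClosed P := polyhedron_closed (C.rat P hP)

lemma polys_convex {m : ℕ} (C : PolyComplex m) {P : Set (Fin m → ℝ)} (hP : P ∈ C.polys) :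
    Convex ℝ P := by
  obtain ⟨V, R, hV, rfl⟩ := C.rat P hP
  exact polyhedron_convex V R

lemma polys_nonempty {m : ℕ} (C : PolyComplex m) {P : Set (Fin m → ℝ)} (hP : P ∈ C.polys) :
    P.Nonempty := by
  obtain ⟨V, R, hV, rfl⟩ := C.rat P hP
  exact polyhedron_nonempty hV

lemma exists_fulldim_superset {m : ℕ} (C : PolyComplex m) (hC : C.IsComplete)
    {P : Set (Fin m → ℝ)} (hP : P ∈ C.polys) :
    ∃ Λ ∈ C.polys, FullDim Λ ∧ P ⊆ Λ := by
  classical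
  set T : Finset (Set (Fin m → ℝ)) :=
    C.finite.toFinset.filter (fun Q => ¬ P ⊆ Q ∧ (P ∩ Q).Nonempty) with hT
  have hface : ∀ Q ∈ T, ∃ (u : (Fin m → ℝ) →ₗ[ℝ] ℝ) (r : ℝ) (z : Fin m → ℝ),
      ((∀ x ∈ P, r ≤ u x) ∧ (∀ x ∈ P, x ∈ Q → u x = r)) ∧ z ∈ P ∧ r < u z := by
    intro Q hQ
    rw [hT, Finset.mem_filter, Set.Finite.mem_toFinset] at hQ
    obtain ⟨hQp, hnsub, hne⟩ := hQ
    obtain ⟨⟨u, r, hge, heq⟩, _⟩ := C.inter_face P hP Q hQp hne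
    obtain ⟨z, hzP, hzQ⟩ := Set.not_subset.mp hnsub
    refine ⟨u, r, z, ⟨hge, ?_⟩, hzP, ?_⟩
    · intro x hxP hxQ
      have hx : x ∈ P ∩ Q := ⟨hxP, hxQ⟩
      rw [heq] at hx
      exact hx.2
    · rcases lt_or_eq_of_le (hge z hzP) with h | h
      · exact h
      · exfalso
        have : z ∈ {x | x ∈ P ∧ u x = r} := ⟨hzP, h.symm⟩
        rw [← heq] at this
        exact hzQ this.2
  choose uf rf zf hu hz hr using hface
  obtain ⟨xs, hxsP, hxs⟩ : ∃ x, x ∈ P ∧ ∀ Q (hQ : Q ∈ T), rf Q hQ < (uf Q hQ) x := by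
    by_cases hTne : T.Nonempty
    · have hcard : (0:ℝ) < (T.card : ℝ) := by
        exact_mod_cast Finset.card_pos.mpr hTne
      refine ⟨∑ Q ∈ T.attach, ((T.card : ℝ))⁻¹ • zf Q Q.2, ?_, ?_⟩
      · refine (polys_convex C hP).sum_mem (fun _ _ => inv_nonneg.mpr hcard.le) ?_
          (fun Q _ => hz Q.1 Q.2)
        rw [Finset.sum_const, Finset.card_attach, nsmul_eq_mul]
        field_simp
      · intro Q0 hQ0
        have hmap : (uf Q0 hQ0) (∑ Q ∈ T.attach, ((T.card : ℝ))⁻¹ • zf Q Q.2)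
            = ∑ Q ∈ T.attach, ((T.card : ℝ))⁻¹ * (uf Q0 hQ0) (zf Q Q.2) := by
          rw [map_sum]
          exact Finset.sum_congr rfl (fun Q _ => by rw [map_smul, smul_eq_mul])
        rw [hmap]
        have hlt : ∑ Q ∈ T.attach, ((T.card:ℝ))⁻¹ * rf Q0 hQ0
            < ∑ Q ∈ T.attach, ((T.card:ℝ))⁻¹ * (uf Q0 hQ0) (zf Q Q.2) := by
          apply Finset.sum_lt_sum
          · intro i _
            exact mul_le_mul_of_nonneg_left ((hu Q0 hQ0).1 _ (hz i.1 i.2))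
              (inv_nonneg.mpr hcard.le)
          · exact ⟨⟨Q0, hQ0⟩, Finset.mem_attach _ _,
              mul_lt_mul_of_pos_left (hr Q0 hQ0) (inv_pos.mpr hcard)⟩
        calc rf Q0 hQ0 = ∑ Q ∈ T.attach, ((T.card:ℝ))⁻¹ * rf Q0 hQ0 := by
              rw [Finset.sum_const, Finset.card_attach, nsmul_eq_mul]
              field_simp
          _ < _ := hlt
    · obtain ⟨x0, hx0⟩ := polys_nonempty C hP
      refine ⟨x0, hx0, fun Q hQ => absurd ⟨Q, hQ⟩ hTne⟩
  have hnotin : ∀ Q ∈ C.polys, xs ∈ Q → P ⊆ Q := by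
    intro Q hQ hxQ
    by_contra hnsub
    have hQT : Q ∈ T := by
      rw [hT, Finset.mem_filter, Set.Finite.mem_toFinset]
      exact ⟨hQ, hnsub, ⟨xs, hxsP, hxQ⟩⟩
    have h1 := (hu Q hQT).2 xs hxsP hxQ
    exact absurd h1 (ne_of_gt (hxs Q hQT))
  set Bad : Finset (Set (Fin m → ℝ)) := C.finite.toFinset.filter (fun Q => xs ∉ Q) with hBad
  have hBclosed : IsClosed (⋃₀ (Bad : Set (Set (Fin m → ℝ)))) := by
    rw [Set.sUnion_eq_biUnion]
    refine Set.Finite.isClosed_biUnion (Finset.finite_toSet _) ?_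
    intro Q hQ
    rw [Finset.mem_coe, hBad, Finset.mem_filter, Set.Finite.mem_toFinset] at hQ
    exact polys_closed C hQ.1
  set U : Set (Fin m → ℝ) := (⋃₀ (Bad : Set (Set (Fin m → ℝ))))ᶜ with hU
  have hxsU : xs ∈ U := by
    rw [hU, Set.mem_compl_iff]
    rintro ⟨Q, hQ, hxsQ⟩
    rw [Finset.mem_coe, hBad, Finset.mem_filter] at hQ
    exact hQ.2 hxsQ
  set good : Finset (Set (Fin m → ℝ)) := C.finite.toFinset.filter (fun Q => xs ∈ Q) with hgood
  have hUsub : U ⊆ ⋃₀ (good : Set (Set (Fin m → ℝ))) := by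
    intro y hy
    have hy2 : y ∈ ⋃₀ C.polys := by rw [hC]; trivial
    obtain ⟨Q, hQ, hyQ⟩ := hy2
    by_cases hxsQ : xs ∈ Q
    · have hmem : Q ∈ (good : Set (Set (Fin m → ℝ))) := by
        rw [Finset.mem_coe, hgood, Finset.mem_filter, Set.Finite.mem_toFinset]
        exact ⟨hQ, hxsQ⟩
      exact ⟨Q, hmem, hyQ⟩
    · exfalso
      apply hy
      have hmem : Q ∈ (Bad : Set (Set (Fin m → ℝ))) := by
        rw [Finset.mem_coe, hBad, Finset.mem_filter, Set.Finite.mem_toFinset]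
        exact ⟨hQ, hxsQ⟩
      exact ⟨Q, hmem, hyQ⟩
  obtain ⟨Λ, hΛg, hΛint⟩ := exists_interior_nonempty_of_cover good
    (fun Q hQ => by
      rw [hgood, Finset.mem_filter, Set.Finite.mem_toFinset] at hQ
      exact polys_closed C hQ.1)
    U hBclosed.isOpen_compl ⟨xs, hxsU⟩ hUsub
  rw [hgood, Finset.mem_filter, Set.Finite.mem_toFinset] at hΛg
  exact ⟨Λ, hΛg.1, hΛint, hnotin Λ hΛg.1 hΛg.2⟩


lemma mem_coneOf_self {m : ℕ} {G : Finset (Fin m → ℝ)} {w : Fin m → ℝ} (hw : w ∈ G) :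
    w ∈ coneOf G := by
  classical
  refine ⟨fun v => if v = w then 1 else 0, fun v => by
    show (0:ℝ) ≤ if v = w then 1 else 0
    split <;> norm_num, ?_⟩
  have h1 : ∀ v ∈ G, (if v = w then (1:ℝ) else 0) • v = if v = w then w else 0 := by
    intro v _; by_cases h : v = w <;> simp [h]
  rw [Finset.sum_congr rfl h1, Finset.sum_ite_eq' G w (fun _ => w), if_pos hw]

lemma linearIndependent_iota_basis {m : ℕ} (b : Module.Basis (Fin m) ℤ (Fin m → ℤ)) :
    LinearIndependent ℝ (fun j => ι (b j)) := by
  classical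
  set M : Matrix (Fin m) (Fin m) ℤ := (Pi.basisFun ℤ (Fin m)).toMatrix (fun j => b j) with hM
  have hinv : Invertible M := by
    rw [hM]
    exact (Pi.basisFun ℤ (Fin m)).invertibleToMatrix b
  have hdet : IsUnit M.det := Matrix.isUnit_det_of_invertible M
  set M' : Matrix (Fin m) (Fin m) ℝ := M.map (fun z => (z : ℝ)) with hM'
  have hdet' : IsUnit M'.det := by
    have h1 : M'.det = ((M.det : ℤ) : ℝ) := by
      rw [hM']
      exact ((RingHom.map_det (Int.castRingHom ℝ) M).symm)
    rw [h1]
    rcases Int.isUnit_iff.mp hdet with h | h <;> simp [h]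
  rw [Fintype.linearIndependent_iff]
  intro g hg j
  have hmv : M'.mulVec g = 0 := by
    funext i
    have h0 := congrFun hg i
    simp only [Finset.sum_apply, Pi.smul_apply, smul_eq_mul, Pi.zero_apply] at h0
    show ∑ j', M' i j' * g j' = 0
    rw [← h0]
    refine Finset.sum_congr rfl fun j' _ => ?_
    rw [hM', hM]
    simp only [Matrix.map_apply, Module.Basis.toMatrix_apply, Pi.basisFun_repr, ι]
    ring
  have hzero : g = 0 := by
    have h2 : (M'⁻¹).mulVec (M'.mulVec g) = g := by
      rw [Matrix.mulVec_mulVec, Matrix.nonsing_inv_mul _ hdet', Matrix.one_mulVec]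
    rw [hmv, Matrix.mulVec_zero] at h2
    exact h2.symm
  exact congrFun hzero j

lemma snoc_mem_cPoly {m : ℕ} {P : Set (Fin m → ℝ)} {x : Fin m → ℝ} (hx : x ∈ P) :
    Fin.snoc x 1 ∈ cPoly P := by
  apply subset_closure
  constructor
  · rw [Fin.snoc_last]; norm_num
  · have : (fun i : Fin m => (Fin.snoc x (1:ℝ) : Fin (m+1) → ℝ) i.castSucc
        / (Fin.snoc x (1:ℝ) : Fin (m+1) → ℝ) (Fin.last m)) = x := by
      funext i
      rw [Fin.snoc_last, Fin.snoc_castSucc, div_one]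
    rw [this]; exact hx

lemma cPoly_last_nonneg {m : ℕ} {P : Set (Fin m → ℝ)} {z : Fin (m+1) → ℝ} (hz : z ∈ cPoly P) :
    0 ≤ z (Fin.last m) := by
  have hcl : IsClosed {z : Fin (m+1) → ℝ | 0 ≤ z (Fin.last m)} :=
    isClosed_le continuous_const (continuous_apply _)
  have hsub : {z : Fin (m+1) → ℝ | 0 < z (Fin.last m) ∧
      (fun i : Fin m => z i.castSucc / z (Fin.last m)) ∈ P} ⊆
      {z : Fin (m+1) → ℝ | 0 ≤ z (Fin.last m)} := fun z hz => hz.1.le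
  exact (closure_minimal hsub hcl) hz

lemma cPoly_proj_mem {m : ℕ} {P : Set (Fin m → ℝ)} (hP : IsClosed P) {z : Fin (m+1) → ℝ}
    (hz : z ∈ cPoly P) (hpos : 0 < z (Fin.last m)) :
    (fun i : Fin m => z i.castSucc / z (Fin.last m)) ∈ P := by
  set S := {z : Fin (m+1) → ℝ | 0 < z (Fin.last m) ∧
      (fun i : Fin m => z i.castSucc / z (Fin.last m)) ∈ P} with hS
  set π : (Fin (m+1) → ℝ) → (Fin m → ℝ) :=
    fun z => (fun i : Fin m => z i.castSucc / z (Fin.last m)) with hπ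
  have hcont : ContinuousWithinAt π S z := by
    apply ContinuousAt.continuousWithinAt
    apply continuousAt_pi.mpr
    intro i
    exact ((continuous_apply (i.castSucc : Fin (m+1))).continuousAt).div
      ((continuous_apply (Fin.last m)).continuousAt) (ne_of_gt hpos)
  have hmem : π z ∈ closure (π '' S) := hcont.mem_closure_image hz
  have himg : π '' S ⊆ P := by
    rintro _ ⟨w, hw, rfl⟩
    exact hw.2
  have := closure_minimal himg hP
  exact this hmem

lemma cPoly_nonneg_of_nonneg_on_gen {m : ℕ} {P : Set (Fin m → ℝ)}
    (ℓ : (Fin (m+1) → ℝ) →ₗ[ℝ] ℝ)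
    (h : ∀ z ∈ {z : Fin (m+1) → ℝ | 0 < z (Fin.last m) ∧
      (fun i : Fin m => z i.castSucc / z (Fin.last m)) ∈ P}, 0 ≤ ℓ z) :
    ∀ z ∈ cPoly P, 0 ≤ ℓ z := by
  intro z hz
  have hcl : IsClosed {z : Fin (m+1) → ℝ | 0 ≤ ℓ z} :=
    isClosed_le continuous_const ℓ.continuous_of_finiteDimensional
  exact (closure_minimal h hcl) hz


lemma vertex_generator {m : ℕ} (C : PolyComplex m) {Λ : Set (Fin m → ℝ)} (hΛ : Λ ∈ C.polys)
    {b : Module.Basis (Fin (m+1)) ℤ (Fin (m+1) → ℤ)} {s : Finset (Fin (m+1))}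
    (hcone : cPoly Λ = coneOf (s.image fun j => ι (b j)))
    {v : Fin m → ℝ} (hv : v ∈ C.vtx) (hvΛ : v ∈ Λ) :
    ∃ j ∈ s, ∃ L : ℝ, 0 < L ∧ ι (b j) = L • (Fin.snoc v 1 : Fin (m+1) → ℝ) := by
  classical
  set φ : Fin (m+1) → (Fin (m+1) → ℝ) := fun j => ι (b j) with hφ
  have hli := linearIndependent_iota_basis b
  have hinj : Function.Injective φ := hli.injective
  have hne : (Λ ∩ {v}).Nonempty := ⟨v, hvΛ, rfl⟩
  obtain ⟨u, r, hge, heq⟩ := (C.inter_face Λ hΛ {v} hv hne).1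
  have hvface : u v = r := by
    have : v ∈ Λ ∩ {v} := ⟨hvΛ, rfl⟩
    rw [heq] at this
    exact this.2
  set projL : (Fin (m+1) → ℝ) →ₗ[ℝ] (Fin m → ℝ) := LinearMap.funLeft ℝ ℝ Fin.castSucc with hprojL
  set lastL : (Fin (m+1) → ℝ) →ₗ[ℝ] ℝ := LinearMap.proj (Fin.last m) with hlastL
  set uhat : (Fin (m+1) → ℝ) →ₗ[ℝ] ℝ := u.comp projL - r • lastL with huhat
  have huhat_apply : ∀ z : Fin (m+1) → ℝ,
      uhat z = u (fun i => z i.castSucc) - r * z (Fin.last m) := by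
    intro z
    rw [huhat]
    simp only [LinearMap.sub_apply, LinearMap.smul_apply, LinearMap.comp_apply,
      LinearMap.proj_apply, smul_eq_mul, hprojL, hlastL]
    rfl
  have huhat_nonneg : ∀ z ∈ cPoly Λ, 0 ≤ uhat z := by
    apply cPoly_nonneg_of_nonneg_on_gen
    rintro z ⟨hzpos, hzmem⟩
    have hdecomp : (fun i : Fin m => z i.castSucc)
        = z (Fin.last m) • (fun i : Fin m => z i.castSucc / z (Fin.last m)) := by
      funext i
      rw [Pi.smul_apply, smul_eq_mul]
      field_simp
    have h2 : uhat z = z (Fin.last m) * (u (fun i => z i.castSucc / z (Fin.last m)) - r) := by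
      rw [huhat_apply, hdecomp, map_smul, smul_eq_mul]
      ring
    rw [h2]
    exact mul_nonneg hzpos.le (sub_nonneg.mpr (hge _ hzmem))
  have hv1 : (Fin.snoc v 1 : Fin (m+1) → ℝ) ∈ cPoly Λ := snoc_mem_cPoly hvΛ
  have huv : uhat (Fin.snoc v 1) = 0 := by
    rw [huhat_apply]
    have h1 : (fun i : Fin m => (Fin.snoc v (1:ℝ) : Fin (m+1) → ℝ) i.castSucc) = v := by
      funext i; rw [Fin.snoc_castSucc]
    rw [h1, Fin.snoc_last, hvface]
    ring
  rw [hcone] at hv1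
  obtain ⟨c, hc0, hcsum⟩ := hv1
  have hsum2 : (Fin.snoc v 1 : Fin (m+1) → ℝ) = ∑ j ∈ s, c (φ j) • φ j := by
    rw [hcsum]
    exact Finset.sum_image (fun a _ a' _ h => hinj h)
  have hgen_mem : ∀ j ∈ s, φ j ∈ cPoly Λ := by
    intro j hj
    rw [hcone]
    exact mem_coneOf_self (Finset.mem_image_of_mem _ hj)
  have hlast : ∑ j ∈ s, c (φ j) * φ j (Fin.last m) = 1 := by
    have h3 := congrFun hsum2 (Fin.last m)
    rw [Fin.snoc_last, Finset.sum_apply] at h3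
    simp only [Pi.smul_apply, smul_eq_mul] at h3
    exact h3.symm
  obtain ⟨j, hjs, hjpos⟩ : ∃ j ∈ s, 0 < c (φ j) * φ j (Fin.last m) := by
    by_contra h
    push_neg at h
    have h4 : ∑ j ∈ s, c (φ j) * φ j (Fin.last m) ≤ 0 := Finset.sum_nonpos h
    rw [hlast] at h4; linarith
  have hcj : 0 < c (φ j) := by
    rcases mul_pos_iff.mp hjpos with ⟨h1, _⟩ | ⟨h1, h2⟩
    · exact h1
    · exact absurd (hc0 (φ j)) (not_le.mpr h1)
  have hLpos : 0 < φ j (Fin.last m) := by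
    by_contra h
    push_neg at h
    nlinarith [hc0 (φ j)]
  have hsz : ∑ i ∈ s, c (φ i) * uhat (φ i) = 0 := by
    have h5 : uhat (Fin.snoc v 1) = ∑ i ∈ s, c (φ i) * uhat (φ i) := by
      rw [hsum2, map_sum]
      exact Finset.sum_congr rfl (fun i _ => by rw [map_smul, smul_eq_mul])
    rw [← h5, huv]
  have huj : uhat (φ j) = 0 := by
    have h6 := (Finset.sum_eq_zero_iff_of_nonneg
      (fun i hi => mul_nonneg (hc0 _) (huhat_nonneg _ (hgen_mem i hi)))).mp hsz j hjs
    rcases mul_eq_zero.mp h6 with h | h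
    · exact absurd h (ne_of_gt hcj)
    · exact h
  set w : Fin m → ℝ := fun i => φ j i.castSucc / φ j (Fin.last m) with hw
  have hwΛ : w ∈ Λ := cPoly_proj_mem (polys_closed C hΛ) (hgen_mem j hjs) hLpos
  have huw : u w = r := by
    rw [huhat_apply] at huj
    have hdecomp : (fun i : Fin m => φ j i.castSucc) = φ j (Fin.last m) • w := by
      funext i
      rw [hw, Pi.smul_apply, smul_eq_mul]
      field_simp
    rw [hdecomp, map_smul, smul_eq_mul] at huj
    have h7 : φ j (Fin.last m) * (u w - r) = 0 := by ring_nf; ring_nf at huj; linarith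
    rcases mul_eq_zero.mp h7 with h | h
    · exact absurd h (ne_of_gt hLpos)
    · linarith
  have hwv : w = v := by
    have h8 : w ∈ Λ ∩ {v} := by rw [heq]; exact ⟨hwΛ, huw⟩
    exact h8.2
  refine ⟨j, hjs, φ j (Fin.last m), hLpos, ?_⟩
  funext i
  refine Fin.lastCases ?_ (fun i => ?_) i
  · rw [Pi.smul_apply, Fin.snoc_last, smul_eq_mul, mul_one]
  · rw [Pi.smul_apply, Fin.snoc_castSucc, smul_eq_mul]
    have h9 := congrFun hwv i
    rw [hw] at h9
    beta_reduce at h9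
    rw [← h9]
    field_simp
    rfl


noncomputable def snocL (m : ℕ) : (Fin m → ℝ) →ₗ[ℝ] (Fin (m+1) → ℝ) where
  toFun := fun x => Fin.snoc x 0
  map_add' := by
    intro x y
    funext i
    refine Fin.lastCases ?_ (fun i => ?_) i
    · simp
    · simp
  map_smul' := by
    intro cr x
    funext i
    refine Fin.lastCases ?_ (fun i => ?_) i
    · simp
    · simp

lemma segment_mem_polys {m : ℕ} (C : PolyComplex m) (hreg : C.IsRegular)
    {Λ : Set (Fin m → ℝ)} (hΛ : Λ ∈ C.polys) {v v' : Fin m → ℝ}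
    (hv : v ∈ C.vtx) (hvΛ : v ∈ Λ) (hv' : v' ∈ C.vtx) (hv'Λ : v' ∈ Λ) (hne : v ≠ v') :
    segment ℝ v v' ∈ C.polys := by
  classical
  obtain ⟨b, s, hcone⟩ := hreg Λ hΛ
  set φ : Fin (m+1) → (Fin (m+1) → ℝ) := fun j => ι (b j) with hφ
  have hli := linearIndependent_iota_basis b
  have hinj : Function.Injective φ := hli.injective
  obtain ⟨j, hjs, L, hL, hgj⟩ := vertex_generator C hΛ hcone hv hvΛ
  obtain ⟨j', hjs', L', hL', hgj'⟩ := vertex_generator C hΛ hcone hv' hv'Λ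
  have hgj : φ j = L • (Fin.snoc v 1 : Fin (m+1) → ℝ) := hgj
  have hgj' : φ j' = L' • (Fin.snoc v' 1 : Fin (m+1) → ℝ) := hgj'
  have hjj : j ≠ j' := by
    rintro rfl
    have h1 : L = L' := by
      have h2 := congrFun (hgj.symm.trans hgj') (Fin.last m)
      simpa [Fin.snoc_last] using h2
    apply hne
    funext i
    have h3 := congrFun (hgj.symm.trans hgj') i.castSucc
    rw [h1] at h3
    simp only [Pi.smul_apply, Fin.snoc_castSucc, smul_eq_mul] at h3
    exact mul_left_cancel₀ (ne_of_gt hL') h3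
  set B : Module.Basis (Fin (m+1)) ℝ (Fin (m+1) → ℝ) :=
    basisOfLinearIndependentOfCardEqFinrank hli (by simp [Module.finrank_pi]) with hB
  have hBcoe : ∀ i, B i = φ i := by
    intro i
    rw [hB, coe_basisOfLinearIndependentOfCardEqFinrank]
  set F : Finset (Fin (m+1)) := (s.erase j).erase j' with hF
  have hjF : j ∉ F := by
    intro h
    exact Finset.notMem_erase j s (Finset.mem_of_mem_erase h)
  have hj'F : j' ∉ F := Finset.notMem_erase j' _
  have hFs : F ⊆ s := (Finset.erase_subset _ _).trans (Finset.erase_subset _ _)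
  set ℓ : (Fin (m+1) → ℝ) →ₗ[ℝ] ℝ := ∑ i ∈ F, B.coord i with hℓ
  have hℓgen : ∀ i, ℓ (φ i) = if i ∈ F then 1 else 0 := by
    intro i
    rw [hℓ, LinearMap.sum_apply]
    have h4 : ∀ i' ∈ F, B.coord i' (φ i) = if i = i' then 1 else 0 := by
      intro i' _
      rw [← hBcoe, Module.Basis.coord_apply, Module.Basis.repr_self, Finsupp.single_apply]
    rw [Finset.sum_congr rfl h4, Finset.sum_ite_eq F i (fun _ => (1:ℝ))]
  have hdecomp : ∀ z ∈ cPoly Λ, ∃ d : Fin (m+1) → ℝ, (∀ i, 0 ≤ d i) ∧ z = ∑ i ∈ s, d i • φ i := by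
    intro z hz
    rw [hcone] at hz
    obtain ⟨c, hc0, hcs⟩ := hz
    exact ⟨fun i => c (φ i), fun i => hc0 _,
      by rw [hcs]; exact Finset.sum_image (fun a _ a' _ h => hinj h)⟩
  have hℓnn : ∀ z ∈ cPoly Λ, 0 ≤ ℓ z := by
    intro z hz
    obtain ⟨d, hd0, rfl⟩ := hdecomp z hz
    rw [map_sum]
    apply Finset.sum_nonneg
    intro i hi
    rw [map_smul, smul_eq_mul, hℓgen]
    split
    · simpa using hd0 i
    · simp
  set u' : (Fin m → ℝ) →ₗ[ℝ] ℝ := ℓ.comp (snocL m) with hu'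
  set a : ℝ := ℓ (Fin.snoc 0 1) with ha
  have hsplit : ∀ x : Fin m → ℝ, ℓ (Fin.snoc x 1) = u' x + a := by
    intro x
    have h5 : (Fin.snoc x 1 : Fin (m+1) → ℝ) = Fin.snoc x 0 + Fin.snoc (0 : Fin m → ℝ) 1 := by
      funext i
      refine Fin.lastCases ?_ (fun i => ?_) i <;> simp
    rw [h5, map_add, hu', ha]
    rfl
  have hval : ℓ (Fin.snoc v 1) = 0 := by
    have h1 : (Fin.snoc v 1 : Fin (m+1) → ℝ) = L⁻¹ • φ j := by
      rw [hgj, smul_smul, inv_mul_cancel₀ (ne_of_gt hL), one_smul]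
    rw [h1, map_smul, smul_eq_mul, hℓgen, if_neg hjF, mul_zero]
  have hval' : ℓ (Fin.snoc v' 1) = 0 := by
    have h1 : (Fin.snoc v' 1 : Fin (m+1) → ℝ) = L'⁻¹ • φ j' := by
      rw [hgj', smul_smul, inv_mul_cancel₀ (ne_of_gt hL'), one_smul]
    rw [h1, map_smul, smul_eq_mul, hℓgen, if_neg hj'F, mul_zero]
  have hineq : ∀ x ∈ Λ, -a ≤ u' x := by
    intro x hx
    have h6 := hℓnn _ (snoc_mem_cPoly hx)
    rw [hsplit] at h6
    linarith
  have hseg : {x | x ∈ Λ ∧ u' x = -a} = segment ℝ v v' := by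
    ext x
    constructor
    · rintro ⟨hxΛ, hxu⟩
      have hx0 : ℓ (Fin.snoc x 1) = 0 := by rw [hsplit, hxu]; ring
      obtain ⟨d, hd0, hxd⟩ := hdecomp _ (snoc_mem_cPoly hxΛ)
      have hsum0 : ∑ i ∈ s, d i * (if i ∈ F then 1 else 0) = 0 := by
        have h9 : ℓ (Fin.snoc x 1) = ∑ i ∈ s, d i * (if i ∈ F then 1 else 0) := by
          rw [hxd, map_sum]
          exact Finset.sum_congr rfl (fun i _ => by rw [map_smul, smul_eq_mul, hℓgen])
        rw [← h9, hx0]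
      have hterm : ∀ i ∈ s, d i * (if i ∈ F then 1 else 0) = 0 :=
        (Finset.sum_eq_zero_iff_of_nonneg (fun i _ => by
          split
          · simpa using hd0 i
          · simp)).mp hsum0
      have hdF : ∀ i ∈ F, d i = 0 := by
        intro i hi
        have := hterm i (hFs hi)
        rw [if_pos hi, mul_one] at this
        exact this
      have hj'mem : j' ∈ s.erase j := Finset.mem_erase.mpr ⟨Ne.symm hjj, hjs'⟩
      have hs_eq : s = insert j (insert j' F) := by
        rw [hF, Finset.insert_erase hj'mem, Finset.insert_erase hjs]
      have hjnotin : j ∉ insert j' F := by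
        rw [Finset.mem_insert]
        rintro (rfl | h)
        · exact hjj rfl
        · exact hjF h
      have hxsum : (Fin.snoc x 1 : Fin (m+1) → ℝ) = d j • φ j + d j' • φ j' := by
        rw [hxd, hs_eq, Finset.sum_insert hjnotin, Finset.sum_insert hj'F,
          Finset.sum_eq_zero (fun i hi => by rw [hdF i hi, zero_smul]), add_zero]
      rw [hgj, hgj', smul_smul, smul_smul] at hxsum
      have htt : d j * L + d j' * L' = 1 := by
        have h7 := congrFun hxsum (Fin.last m)
        simp only [Pi.add_apply, Pi.smul_apply, Fin.snoc_last, smul_eq_mul, mul_one] at h7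
        exact h7.symm
      refine ⟨d j * L, d j' * L', mul_nonneg (hd0 j) hL.le, mul_nonneg (hd0 j') hL'.le, htt, ?_⟩
      funext i
      have h8 := congrFun hxsum i.castSucc
      simp only [Pi.add_apply, Pi.smul_apply, Fin.snoc_castSucc, smul_eq_mul] at h8
      rw [Pi.add_apply, Pi.smul_apply, Pi.smul_apply, smul_eq_mul, smul_eq_mul]
      exact h8.symm
    · rintro ⟨t, t', ht, ht', htt, rfl⟩
      refine ⟨(polys_convex C hΛ).segment_subset hvΛ hv'Λ ⟨t, t', ht, ht', htt, rfl⟩, ?_⟩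
      have h1 : (Fin.snoc (t • v + t' • v') 1 : Fin (m+1) → ℝ)
          = t • (Fin.snoc v 1 : Fin (m+1) → ℝ) + t' • (Fin.snoc v' 1 : Fin (m+1) → ℝ) := by
        funext i
        refine Fin.lastCases ?_ (fun i => ?_) i
        · simp only [Fin.snoc_last, Pi.add_apply, Pi.smul_apply, smul_eq_mul, mul_one]
          exact htt.symm
        · simp
      have h2 : ℓ (Fin.snoc (t • v + t' • v') 1) = 0 := by
        rw [h1, map_add, map_smul, map_smul, hval, hval', smul_zero, smul_zero, add_zero]
      have h3 := hsplit (t • v + t' • v')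
      rw [h2] at h3
      linarith
  have hface : IsFaceOfPoly (segment ℝ v v') Λ := ⟨u', -a, hineq, hseg.symm⟩
  exact C.face_mem Λ hΛ _ hface ⟨v, left_mem_segment ℝ v v'⟩

end Aux

/-- For a complete regular SCR polyhedral complex `Π` and a tuple
`(f_v)_{v ∈ Π(0)}` of degree-`k` piecewise polynomial functions on the star fans,
membership in the kernel of the map `ρ` (whose `γ`-component, for a bounded edge `γ`
with endpoints `v₁, v₂`, is `u_{v₁,γ}^* f_{v₁} - u_{v₂,γ}^* f_{v₂}`) is equivalent to
being an affine piecewise polynomial function: `ker ρ = PP^k(Π)`. -/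
theorem stmt12 {n : ℕ} (C : PolyComplex n) (hC : C.IsComplete) (hreg : C.IsRegular)
    (hSCR : ∀ P ∈ C.polys, ∃ v ∈ C.vtx, v ∈ P)
    (k : ℕ) (f : (Fin n → ℝ) → ((Fin n → ℝ) → ℝ))
    (hf : ∀ v ∈ C.vtx, StarPP C v k (f v)) :
    KerRho C f ↔ AffinePP C k f := by
  constructor
  · intro hker
    refine ⟨hf, ?_⟩
    intro Λ hΛ hfull v hv hvΛ v' hv' hv'Λ p p' hpdeg hprep hp'deg hp'rep x
    obtain ⟨z, hz⟩ := hfull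
    obtain ⟨ε, hε, hball⟩ := Metric.isOpen_iff.mp isOpen_interior z hz
    have hballΛ : Metric.ball z ε ⊆ Λ := hball.trans interior_subset
    have hfeq : ∀ y ∈ Metric.ball z ε, f v (y - v) = f v' (y - v') := by
      by_cases hvv : v = v'
      · subst hvv; intro y _; rfl
      · have hseg := segment_mem_polys C hreg hΛ hv hvΛ hv' hv'Λ hvv
        have hedge : IsBddEdge C (segment ℝ v v') v v' := ⟨hseg, hvv, hv, hv', rfl⟩
        intro y hy
        exact hker _ _ _ hedge Λ hΛ ((polys_convex C hΛ).segment_subset hvΛ hv'Λ) y (hballΛ hy)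
    have hkey : ∀ y ∈ Metric.ball z ε, evalR p (y - v) = evalR p' (y - v') := by
      intro y hy
      rw [← hprep _ ⟨1, zero_le_one, y, hballΛ hy, (one_smul ℝ (y - v)).symm⟩,
        ← hp'rep _ ⟨1, zero_le_one, y, hballΛ hy, (one_smul ℝ (y - v')).symm⟩]
      exact hfeq y hy
    exact evalR_shift_eq_of_ball p p' v v' z hε hkey x
  · rintro ⟨_, haff⟩ γ w w' hedge P hP hγP x hxP
    obtain ⟨hγpolys, hww, hwv, hw'v, hγseg⟩ := hedge
    obtain ⟨Λ, hΛ, hfull, hPΛ⟩ := exists_fulldim_superset C hC hP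
    have hwΛ : w ∈ Λ := hPΛ (hγP (hγseg ▸ left_mem_segment ℝ w w'))
    have hw'Λ : w' ∈ Λ := hPΛ (hγP (hγseg ▸ right_mem_segment ℝ w w'))
    obtain ⟨p, hpdeg, hprep⟩ := hf w hwv Λ hΛ hwΛ
    obtain ⟨p', hp'deg, hp'rep⟩ := hf w' hw'v Λ hΛ hw'Λ
    have h := haff Λ hΛ hfull w hwv hwΛ w' hw'v hw'Λ p p' hpdeg hprep hp'deg hp'rep x
    rw [hprep _ ⟨1, zero_le_one, x, hPΛ hxP, (one_smul ℝ (x - w)).symm⟩,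
      hp'rep _ ⟨1, zero_le_one, x, hPΛ hxP, (one_smul ℝ (x - w')).symm⟩]
    exact h


end PPArakelov
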